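/- Let D ∈ H⁴ and suppose g·D = NF_orth(λ₁, λ₂, λ₃) for some g ∈ SO(3) and λ₁, λ₂, λ₃ ∈ ℝ (i.e., D lies in the closed orthotropic stratum). Then the invariants J₂, …, J₇ of D satisfy the six syzygies: (a) −1350J₃J₇ − 840J₄J₆ + 465J₂²J₆ + 270J₅² + 720J₂J₃J₅ + 747J₂J₄² − 170J₃²J₄ − 564J₂³J₄ + 70J₂²J₃² + 84J₂⁵ = 0; (b) −1620J₄J₇ + 810J₂²J₇ + 360J₅J₆ − 1110J₂J₃J₆ + 999J₂J₄J₅ + 960J₃²J₅ − 549J₂³J₅ − 972J₃J₄² + 1638J₂²J₃J₄ − 80J₂J₃³ − 312J₂⁴J₃ = 0; (c) 4050J₅J₇ − 25650J₂J₃J₇ − 14310J₂J₄J₆ + 9600J₃²J₆ + 7965J₂³J₆ + 9450J₃J₄J₅ + 10530J₂²J₃J₅ + 1134J₄³ + 11259J₂²J₄² − 12330J₂J₃²J₄ − 9018J₂⁴J₄ + 400J₃⁴ + 3270J₂³J₃² + 1350J₂⁶ = 0; (d) −12150J₂J₃J₇ + 3600J₆² − 11610J₂J₄J₆ + 9750J₃²J₆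 + 4410J₂³J₆ + 8505J₃J₄J₅ + 3645J₂²J₃J₅ + 1458J₄³ + 5670J₂²J₄² − 10710J₂J₃²J₄ − 4104J₂⁴J₄ + 400J₃⁴ + 2580J₂³J₃² + 576J₂⁶ = 0; (e) 1800J₆J₇ − 10800J₂J₄J₇ + 4800J₃²J₇ + 4950J₂³J₇ + 4020J₃J₄J₆ − 8370J₂²J₃J₆ + 162J₄²J₅ + 7371J₂²J₄J₅ + 2880J₂J₃²J₅ − 3483J₂⁴J₅ − 9216J₂J₃J₄² + 640J₃³J₄ + 11946J₂³J₃J₄ − 720J₂²J₃³ − 2160J₂⁵J₃ = 0; (f) 60750J₇² + 178200J₃J₄J₇ − 546750J₂²J₃J₇ + 3780J₄²J₆ − 246780J₂²J₄J₆ + 348000J₂J₃²J₆ + 137025J₂⁴J₆ + 116640J₂J₃J₄J₅ − 75600J₃³J₅ + 223560J₂³J₃J₅ + 29808J₂J₄³ + 82170J₃²J₄² + 177660J₂³J₄² − 438390J₂²J₃²J₄ − 148014J₂⁵J₄ + 17200J₂J₃⁴ + 102000J₂⁴J₃² + 22221J₂⁷ = 0. Moreover, if 6J₆ − 9J₂J₄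 − 20J₃² + 3J₂³ ≠ 0, then the elementary symmetric functions σ₁ = λ₁+λ₂+λ₃, σ₂ = λ₁λ₂+λ₁λ₃+λ₂λ₃, σ₃ = λ₁λ₂λ₃ are recovered rationally from the invariants: σ₁ = −9(3J₇ − 3J₂J₅ + 3J₃J₄ − J₂²J₃) / (2(6J₆ − 9J₂J₄ − 20J₃² + 3J₂³)), σ₂ = (4/7)σ₁² − J₂/14, and σ₃ = J₃/24 + σ₁³/7 − σ₁J₂/56. -/
import Mathlib


open Matrix BigOperators

abbrev Mat3 := Matrix (Fin 3) (Fin 3) ℝ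
abbrev T4 := Fin 3 → Fin 3 → Fin 3 → Fin 3 → ℝ

/-- `g ∈ SO(3)`: real orthogonal 3×3 matrix of determinant 1. -/
def IsSO3 (g : Mat3) : Prop := g * gᵀ = 1 ∧ g.det = 1

/-- A harmonic fourth-order tensor: totally symmetric and traceless. -/
def IsHarm (D : T4) : Prop :=
  (∀ i j k l, D i j k l = D j i k l) ∧
  (∀ i j k l, D i j k l = D i k j l) ∧
  (∀ i j k l, D i j k l = D i j l k) ∧
  (∀ i j, ∑ k, D k k i j = 0)

/-- The action of a rotation `g` on a fourth-order tensor. -/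
noncomputable def act (g : Mat3) (D : T4) : T4 := fun i j k l =>
  ∑ p, ∑ q, ∑ r, ∑ s, g i p * g j q * g k r * g l s * D p q r s

/-- `D²`, the square of a fourth-order tensor. -/
noncomputable def sqT (D : T4) : T4 := fun i j k l => ∑ p, ∑ q, D i j p q * D p q k l

/-- `D³`, the cube of a fourth-order tensor. -/
noncomputable def cbT (D : T4) : T4 := fun i j k l => ∑ p, ∑ q, sqT D i j p q * D p q k l

/-- The second-order Boehler covariant `d₂(D) j l = ∑ᵢ (D²) i j i l`. -/
noncomputable def d2 (D : T4) : Mat3 := Matrix.of fun j l => ∑ i, sqT D i j i l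

/-- The second-order covariant `d₃(D) j l = ∑ᵢ (D³) i j i l`. -/
noncomputable def d3 (D : T4) : Mat3 := Matrix.of fun j l => ∑ i, cbT D i j i l

/-- Fundamental invariant `J₂ = tr d₂`. -/
noncomputable def J2 (D : T4) : ℝ := (d2 D).trace
/-- Fundamental invariant `J₃ = tr d₃`. -/
noncomputable def J3 (D : T4) : ℝ := (d3 D).trace
/-- Fundamental invariant `J₄ = tr(d₂²)`. -/
noncomputable def J4 (D : T4) : ℝ := (d2 D * d2 D).trace
/-- Fundamental invariant `J₅ = ∑ (d₂)ᵢⱼ D i j k l (d₂)ₖₗ`. -/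
noncomputable def J5 (D : T4) : ℝ :=
  ∑ i, ∑ j, ∑ k, ∑ l, d2 D i j * D i j k l * d2 D k l
/-- Fundamental invariant `J₆ = tr(d₂³)`. -/
noncomputable def J6 (D : T4) : ℝ := (d2 D * d2 D * d2 D).trace
/-- Fundamental invariant `J₇ = ∑ (d₂²)ᵢⱼ D i j k l (d₂)ₖₗ`. -/
noncomputable def J7 (D : T4) : ℝ :=
  ∑ i, ∑ j, ∑ k, ∑ l, (d2 D * d2 D) i j * D i j k l * d2 D k l
/-- Fundamental invariant `J₈ = ∑ (d₂²)ᵢⱼ (D²) i j k l (d₂)ₖₗ`. -/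
noncomputable def J8 (D : T4) : ℝ :=
  ∑ i, ∑ j, ∑ k, ∑ l, (d2 D * d2 D) i j * sqT D i j k l * d2 D k l
/-- Fundamental invariant `J₉ = ∑ (d₂²)ᵢⱼ D i j k l (d₂²)ₖₗ`. -/
noncomputable def J9 (D : T4) : ℝ :=
  ∑ i, ∑ j, ∑ k, ∑ l, (d2 D * d2 D) i j * D i j k l * (d2 D * d2 D) k l
/-- Fundamental invariant `J₁₀ = ∑ (d₂²)ᵢⱼ (D²) i j k l (d₂²)ₖₗ`. -/
noncomputable def J10 (D : T4) : ℝ :=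
  ∑ i, ∑ j, ∑ k, ∑ l, (d2 D * d2 D) i j * sqT D i j k l * (d2 D * d2 D) k l

/-- The totally symmetric tensor whose value at `(i,j,k,l)` depends only on the
multiset of indices `{i,j,k,l}`. -/
noncomputable def symT (f : Multiset (Fin 3) → ℝ) : T4 := fun i j k l => f {i, j, k, l}

/-- Normal form of a cubic (`[𝕆]`) tensor in `H⁴` with parameter `δ`
(indices `0,1,2` correspond to `1,2,3`). -/
noncomputable def NFcubic (δ : ℝ) : T4 := symT fun m =>
  if m = {0, 0, 0, 0} ∨ m = {1, 1, 1, 1} ∨ m = {2, 2, 2, 2} then 8 * δ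
  else if m = {0, 0, 1, 1} ∨ m = {0, 0, 2, 2} ∨ m = {1, 1, 2, 2} then -(4 * δ)
  else 0

/-- Normal form of a transversely isotropic (`[O(2)]`) tensor in `H⁴` with parameter `δ`. -/
noncomputable def NFti (δ : ℝ) : T4 := symT fun m =>
  if m = {0, 0, 0, 0} ∨ m = {1, 1, 1, 1} then 3 * δ
  else if m = {2, 2, 2, 2} then 8 * δ
  else if m = {0, 0, 1, 1} then δ
  else if m = {0, 0, 2, 2} ∨ m = {1, 1, 2, 2} then -(4 * δ)
  else 0

/-- Normal form of a trigonal (`[𝔻₃]`) tensor in `H⁴` with parameters `δ, σ`. -/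
noncomputable def NFtrig (δ σ : ℝ) : T4 := symT fun m =>
  if m = {0, 0, 0, 0} ∨ m = {1, 1, 1, 1} then 3 * δ
  else if m = {2, 2, 2, 2} then 8 * δ
  else if m = {0, 0, 1, 1} then δ
  else if m = {0, 0, 2, 2} ∨ m = {1, 1, 2, 2} then -(4 * δ)
  else if m = {0, 0, 1, 2} then -σ
  else if m = {1, 1, 1, 2} then σ
  else 0

/-- Normal form of a tetragonal (`[𝔻₄]`) tensor in `H⁴` with parameters `δ, σ`. -/
noncomputable def NFtetra (δ σ : ℝ) : T4 := symT fun m =>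
  if m = {0, 0, 0, 0} ∨ m = {1, 1, 1, 1} then 3 * δ - σ
  else if m = {2, 2, 2, 2} then 8 * δ
  else if m = {0, 0, 1, 1} then δ + σ
  else if m = {0, 0, 2, 2} ∨ m = {1, 1, 2, 2} then -(4 * δ)
  else 0

/-- Normal form of an orthotropic (`[𝔻₂]`) tensor in `H⁴` with parameters `λ₁, λ₂, λ₃`. -/
noncomputable def NForth (l1 l2 l3 : ℝ) : T4 := symT fun m =>
  if m = {0, 0, 0, 0} then -l2 - l3
  else if m = {1, 1, 1, 1} then -l1 - l3
  else if m = {2, 2, 2, 2} then -l1 - l2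
  else if m = {0, 0, 1, 1} then l3
  else if m = {0, 0, 2, 2} then l2
  else if m = {1, 1, 2, 2} then l1
  else 0

section Aux

/-- Explicit component table of the orthotropic normal form. -/
noncomputable def NFv (l1 l2 l3 : ℝ) : T4 :=
  ![![![![-l2 - l3, 0, 0], ![0, l3, 0], ![0, 0, l2]], ![![0, l3, 0], ![l3, 0, 0], ![0, 0, 0]], ![![0, 0, l2], ![0, 0, 0], ![l2, 0, 0]]], ![![![0, l3, 0], ![l3, 0, 0], ![0, 0, 0]], ![![l3, 0, 0], ![0, -l1 - l3, 0], ![0, 0, l1]], ![![0, 0, 0], ![0, 0, l1], ![0, l1, 0]]], ![![![0, 0, l2], ![0, 0, 0], ![l2, 0, 0]], ![![0, 0, 0], ![0, 0, l1], ![0, l1, 0]], ![![l2, 0, 0], ![0, l1, 0], ![0, 0, -l1 - l2]]]]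

set_option maxHeartbeats 2000000 in
theorem NForth_eq_NFv (l1 l2 l3 : ℝ) : NForth l1 l2 l3 = NFv l1 l2 l3 := by
  funext i j k l
  fin_cases i <;> fin_cases j <;> fin_cases k <;> fin_cases l <;>
    simp (config := { decide := true }) [NForth, symT, NFv, Matrix.vecHead, Matrix.vecTail]

set_option maxHeartbeats 2000000 in
theorem d2_NFv (l1 l2 l3 : ℝ) : d2 (NFv l1 l2 l3) = !![4*l2^2+2*l2*l3+4*l3^2, 0, 0; 0, 4*l1^2+2*l1*l3+4*l3^2, 0; 0, 0, 4*l1^2+2*l1*l2+4*l2^2] := by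
  ext j l
  fin_cases j <;> fin_cases l <;>
    · simp [d2, sqT, NFv, Fin.sum_univ_three, Matrix.vecHead, Matrix.vecTail]
      try ring

set_option maxHeartbeats 2000000 in
theorem J2val (l1 l2 l3 : ℝ) : J2 (NFv l1 l2 l3) =
    8*(l1^2+l2^2+l3^2) + 2*(l1*l2+l1*l3+l2*l3) := by
  simp only [J2, d2_NFv]
  simp [Matrix.trace_fin_three]
  ring

set_option maxHeartbeats 2000000 in
theorem J3val (l1 l2 l3 : ℝ) : J3 (NFv l1 l2 l3) =
    -6*(l2*l3^2 + l2^2*l3 + l1*l3^2 - l1*l2*l3 + l1*l2^2 + l1^2*l3 + l1^2*l2) := by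
  simp [J3, d3, cbT, sqT, Matrix.trace, Matrix.diag, NFv, Fin.sum_univ_three,
    Matrix.vecHead, Matrix.vecTail]
  ring

set_option maxHeartbeats 2000000 in
theorem J4val (l1 l2 l3 : ℝ) : J4 (NFv l1 l2 l3) =
    32*(l1^4+l2^4+l3^4) + 16*(l1^3*l2+l1^3*l3+l2^3*l3+l1*l2^3+l1*l3^3+l2*l3^3)
      + 36*(l1^2*l2^2+l1^2*l3^2+l2^2*l3^2) := by
  simp only [J4, d2_NFv]
  simp [Matrix.trace_fin_three, Matrix.mul_apply, Fin.sum_univ_three]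
  ring

set_option maxHeartbeats 2000000 in
theorem J5val (l1 l2 l3 : ℝ) : J5 (NFv l1 l2 l3) =
    -16*(l2*l3^4+l2^4*l3+l1*l3^4+l1*l2^4+l1^4*l3+l1^4*l2)
    -20*(l2^2*l3^3+l2^3*l3^2+l1^2*l3^3+l1^2*l2^3+l1^3*l3^2+l1^3*l2^2)
    +8*(l1*l2*l3^3+l1*l2^3*l3+l1^3*l2*l3)
    +64*(l1*l2^2*l3^2+l1^2*l2*l3^2+l1^2*l2^2*l3) := by
  simp only [J5, d2_NFv]
  simp [NFv, Fin.sum_univ_three, Matrix.vecHead, Matrix.vecTail]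
  ring

set_option maxHeartbeats 2000000 in
theorem J6val (l1 l2 l3 : ℝ) : J6 (NFv l1 l2 l3) =
    128*(l1^6+l2^6+l3^6) + 96*(l1^5*l2+l1^5*l3+l2^5*l3+l1*l2^5+l1*l3^5+l2*l3^5)
    + 240*(l1^4*l2^2+l1^4*l3^2+l2^4*l3^2+l1^2*l2^4+l1^2*l3^4+l2^2*l3^4)
    + 200*(l1^3*l2^3+l1^3*l3^3+l2^3*l3^3) := by
  simp only [J6, d2_NFv]
  simp [Matrix.trace_fin_three, Matrix.mul_apply, Fin.sum_univ_three]
  ring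

set_option maxHeartbeats 2000000 in
theorem J7val (l1 l2 l3 : ℝ) : J7 (NFv l1 l2 l3) =
    -64*(l2*l3^6+l2^6*l3+l1*l3^6+l1*l2^6+l1^6*l3+l1^6*l2)
    -128*(l2^2*l3^5+l2^5*l3^2+l1^2*l3^5+l1^2*l2^5+l1^5*l3^2+l1^5*l2^2)
    -312*(l2^3*l3^4+l2^4*l3^3+l1^3*l3^4+l1^3*l2^4+l1^4*l3^3+l1^4*l2^3)
    +64*(l1*l2*l3^5+l1*l2^5*l3+l1^5*l2*l3+l1*l2^3*l3^3+l1^3*l2*l3^3+l1^3*l2^3*l3)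
    +232*(l1*l2^2*l3^4+l1*l2^4*l3^2+l1^2*l2*l3^4+l1^2*l2^4*l3+l1^4*l2*l3^2+l1^4*l2^2*l3)
    +416*(l1^2*l2^2*l3^3+l1^2*l2^3*l3^2+l1^3*l2^2*l3^2) := by
  simp only [J7, d2_NFv]
  simp [Matrix.mul_apply, NFv, Fin.sum_univ_three, Matrix.vecHead, Matrix.vecTail]
  ring

theorem key9 (g : Mat3) (hgt : gᵀ * g = 1) (a b : Fin 3) :
    g 0 a * g 0 b + g 1 a * g 1 b + g 2 a * g 2 b = if a = b then 1 else 0 := by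
  have h := congrArg (fun M : Mat3 => M a b) hgt
  simpa [Matrix.mul_apply, Matrix.transpose_apply, Fin.sum_univ_three,
    Matrix.one_apply] using h

theorem c1 (g : Mat3) (hgt : gᵀ * g = 1) (F G : Fin 3 → ℝ) :
    ∑ p, (∑ a, g p a * F a) * (∑ b, g p b * G b) = ∑ a, F a * G a := by
  have h00 : g 0 0 * g 0 0 + g 1 0 * g 1 0 + g 2 0 * g 2 0 = 1 := by simpa using key9 g hgt 0 0
  have h01 : g 0 0 * g 0 1 + g 1 0 * g 1 1 + g 2 0 * g 2 1 = 0 := by simpa using key9 g hgt 0 1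
  have h02 : g 0 0 * g 0 2 + g 1 0 * g 1 2 + g 2 0 * g 2 2 = 0 := by simpa using key9 g hgt 0 2
  have h10 : g 0 1 * g 0 0 + g 1 1 * g 1 0 + g 2 1 * g 2 0 = 0 := by simpa using key9 g hgt 1 0
  have h11 : g 0 1 * g 0 1 + g 1 1 * g 1 1 + g 2 1 * g 2 1 = 1 := by simpa using key9 g hgt 1 1
  have h12 : g 0 1 * g 0 2 + g 1 1 * g 1 2 + g 2 1 * g 2 2 = 0 := by simpa using key9 g hgt 1 2
  have h20 : g 0 2 * g 0 0 + g 1 2 * g 1 0 + g 2 2 * g 2 0 = 0 := by simpa using key9 g hgt 2 0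
  have h21 : g 0 2 * g 0 1 + g 1 2 * g 1 1 + g 2 2 * g 2 1 = 0 := by simpa using key9 g hgt 2 1
  have h22 : g 0 2 * g 0 2 + g 1 2 * g 1 2 + g 2 2 * g 2 2 = 1 := by simpa using key9 g hgt 2 2
  simp only [Fin.sum_univ_three]
  linear_combination F 0 * G 0 * h00 + F 0 * G 1 * h01 + F 0 * G 2 * h02 +
    F 1 * G 0 * h10 + F 1 * G 1 * h11 + F 1 * G 2 * h12 +
    F 2 * G 0 * h20 + F 2 * G 1 * h21 + F 2 * G 2 * h22

theorem c1' (g : Mat3) (hgt : gᵀ * g = 1) (W : Fin 3 → Fin 3 → ℝ) :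
    ∑ i, ∑ a, g i a * (∑ c, g i c * W a c) = ∑ a, W a a := by
  have h00 : g 0 0 * g 0 0 + g 1 0 * g 1 0 + g 2 0 * g 2 0 = 1 := by simpa using key9 g hgt 0 0
  have h01 : g 0 0 * g 0 1 + g 1 0 * g 1 1 + g 2 0 * g 2 1 = 0 := by simpa using key9 g hgt 0 1
  have h02 : g 0 0 * g 0 2 + g 1 0 * g 1 2 + g 2 0 * g 2 2 = 0 := by simpa using key9 g hgt 0 2
  have h10 : g 0 1 * g 0 0 + g 1 1 * g 1 0 + g 2 1 * g 2 0 = 0 := by simpa using key9 g hgt 1 0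
  have h11 : g 0 1 * g 0 1 + g 1 1 * g 1 1 + g 2 1 * g 2 1 = 1 := by simpa using key9 g hgt 1 1
  have h12 : g 0 1 * g 0 2 + g 1 1 * g 1 2 + g 2 1 * g 2 2 = 0 := by simpa using key9 g hgt 1 2
  have h20 : g 0 2 * g 0 0 + g 1 2 * g 1 0 + g 2 2 * g 2 0 = 0 := by simpa using key9 g hgt 2 0
  have h21 : g 0 2 * g 0 1 + g 1 2 * g 1 1 + g 2 2 * g 2 1 = 0 := by simpa using key9 g hgt 2 1
  have h22 : g 0 2 * g 0 2 + g 1 2 * g 1 2 + g 2 2 * g 2 2 = 1 := by simpa using key9 g hgt 2 2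
  simp only [Fin.sum_univ_three]
  linear_combination W 0 0 * h00 + W 0 1 * h01 + W 0 2 * h02 +
    W 1 0 * h10 + W 1 1 * h11 + W 1 2 * h12 +
    W 2 0 * h20 + W 2 1 * h21 + W 2 2 * h22

theorem c2 (g : Mat3) (hgt : gᵀ * g = 1) (U V : Fin 3 → Fin 3 → ℝ) :
    ∑ p, ∑ q, (∑ c, g p c * (∑ d, g q d * U c d)) * (∑ a, g p a * (∑ b, g q b * V a b))
      = ∑ c, ∑ d, U c d * V c d := by
  rw [Finset.sum_comm]
  rw [Finset.sum_congr rfl fun q _ => c1 g hgt (fun c => ∑ d, g q d * U c d)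
    (fun a => ∑ b, g q b * V a b)]
  rw [Finset.sum_comm]
  exact Finset.sum_congr rfl fun c _ => c1 g hgt (fun d => U c d) (fun b => V c b)

set_option maxHeartbeats 2000000 in
theorem act_pt (g : Mat3) (hgt : gᵀ * g = 1) (A B : T4) (i j k l : Fin 3) :
    (∑ p, ∑ q, act g A i j p q * act g B p q k l)
      = act g (fun i j k l => ∑ p, ∑ q, A i j p q * B p q k l) i j k l := by
  have e1 : ∀ p q, act g A i j p q
      = ∑ c, g p c * (∑ d, g q d * (∑ a, ∑ b, g i a * g j b * A a b c d)) := by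
    intro p q; simp only [act, Fin.sum_univ_three]; ring
  have e2 : ∀ p q, act g B p q k l
      = ∑ a, g p a * (∑ b, g q b * (∑ c, ∑ d, g k c * g l d * B a b c d)) := by
    intro p q; simp only [act, Fin.sum_univ_three]; ring
  calc (∑ p, ∑ q, act g A i j p q * act g B p q k l)
      = ∑ p, ∑ q, (∑ c, g p c * (∑ d, g q d * (∑ a, ∑ b, g i a * g j b * A a b c d)))
          * (∑ a, g p a * (∑ b, g q b * (∑ c, ∑ d, g k c * g l d * B a b c d))) :=
        Finset.sum_congr rfl fun p _ => Finset.sum_congr rfl fun q _ => by rw [e1, e2]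
    _ = ∑ c, ∑ d, (∑ a, ∑ b, g i a * g j b * A a b c d)
          * (∑ c', ∑ d', g k c' * g l d' * B c d c' d') := c2 g hgt _ _
    _ = act g (fun i j k l => ∑ p, ∑ q, A i j p q * B p q k l) i j k l := by
        simp only [act, Fin.sum_univ_three]; ring

set_option maxHeartbeats 2000000 in
theorem tr_pt (g : Mat3) (hgt : gᵀ * g = 1) (S : T4) (j l : Fin 3) :
    (∑ i, act g S i j i l) = (g * (Matrix.of fun b d => ∑ a, S a b a d) * gᵀ) j l := by
  have e : ∀ i, act g S i j i l
      = ∑ a, g i a * (∑ c, g i c * (∑ b, ∑ d, g j b * g l d * S a b c d)) := by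
    intro i; simp only [act, Fin.sum_univ_three]; ring
  calc ∑ i, act g S i j i l
      = ∑ a, (∑ b, ∑ d, g j b * g l d * S a b a d) := by
        rw [Finset.sum_congr rfl fun i _ => e i]
        exact c1' g hgt _
    _ = (g * (Matrix.of fun b d => ∑ a, S a b a d) * gᵀ) j l := by
        simp only [Matrix.mul_apply, Matrix.transpose_apply, Matrix.of_apply,
          Fin.sum_univ_three]
        ring

set_option maxHeartbeats 2000000 in
theorem quad (g : Mat3) (hgt : gᵀ * g = 1) (M P : Mat3) (T : T4) :
    (∑ i, ∑ j, ∑ k, ∑ l, (g*M*gᵀ) i j * act g T i j k l * (g*P*gᵀ) k l)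
      = ∑ i, ∑ j, ∑ k, ∑ l, M i j * T i j k l * P k l := by
  have e1 : ∀ (Q : Mat3) (i j : Fin 3), (g*Q*gᵀ) i j
      = ∑ a, g i a * (∑ b, g j b * Q a b) := by
    intro Q i j
    simp only [Matrix.mul_apply, Matrix.transpose_apply, Fin.sum_univ_three]
    ring
  have e2 : ∀ i j k l : Fin 3, act g T i j k l
      = ∑ a, g i a * (∑ b, g j b * (∑ c, ∑ d, g k c * g l d * T a b c d)) := by
    intro i j k l; simp only [act, Fin.sum_univ_three]; ring
  have step1 : ∀ k l : Fin 3, (∑ i, ∑ j, (g*M*gᵀ) i j * act g T i j k l)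
      = ∑ c, g k c * (∑ d, g l d * (∑ a, ∑ b, M a b * T a b c d)) := by
    intro k l
    calc ∑ i, ∑ j, (g*M*gᵀ) i j * act g T i j k l
        = ∑ i, ∑ j, (∑ a, g i a * (∑ b, g j b * M a b))
            * (∑ a, g i a * (∑ b, g j b * (∑ c, ∑ d, g k c * g l d * T a b c d))) :=
          Finset.sum_congr rfl fun i _ => Finset.sum_congr rfl fun j _ => by
            rw [e1, e2]
      _ = ∑ a, ∑ b, M a b * (∑ c, ∑ d, g k c * g l d * T a b c d) := c2 g hgt _ _
      _ = ∑ c, g k c * (∑ d, g l d * (∑ a, ∑ b, M a b * T a b c d)) := by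
          simp only [Fin.sum_univ_three]; ring
  calc (∑ i, ∑ j, ∑ k, ∑ l, (g*M*gᵀ) i j * act g T i j k l * (g*P*gᵀ) k l)
      = ∑ k, ∑ l, (∑ i, ∑ j, (g*M*gᵀ) i j * act g T i j k l) * (g*P*gᵀ) k l := by
        simp only [Fin.sum_univ_three]; ring
    _ = ∑ k, ∑ l, (∑ c, g k c * (∑ d, g l d * (∑ a, ∑ b, M a b * T a b c d)))
          * (∑ c, g k c * (∑ d, g l d * P c d)) :=
        Finset.sum_congr rfl fun k _ => Finset.sum_congr rfl fun l _ => by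
          rw [step1, e1]
    _ = ∑ c, ∑ d, (∑ a, ∑ b, M a b * T a b c d) * P c d := c2 g hgt _ _
    _ = ∑ i, ∑ j, ∑ k, ∑ l, M i j * T i j k l * P k l := by
        simp only [Fin.sum_univ_three]; ring

end Aux


set_option maxHeartbeats 4000000 in
theorem syzygy_abstract (s1 s2 s3 j2 j3 j4 j5 j6 j7 : ℝ)
    (q2 : j2 = -14*s2 + 8*s1^2)
    (q3 : j3 = 24*s3 - 6*s1*s2)
    (q4 : j4 = 68*s2^2 + 40*s1*s3 - 112*s1^2*s2 + 32*s1^4)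
    (q5 : j5 = -12*s2*s3 + 28*s1*s2^2 + 64*s1^2*s3 - 16*s1^3*s2)
    (q6 : j6 = -24*s3^2 - 344*s2^3 - 504*s1*s2*s3 + 1008*s1^2*s2^2 + 192*s1^3*s3 - 672*s1^4*s2 + 128*s1^6)
    (q7 : j7 = 104*s2^2*s3 - 96*s1*s3^2 - 248*s1*s2^3 - 432*s1^2*s2*s3 + 192*s1^3*s2^2 + 384*s1^4*s3 - 64*s1^5*s2) :
    (-1350*j3*j7 - 840*j4*j6 + 465*j2^2*j6 + 270*j5^2 + 720*j2*j3*j5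
       + 747*j2*j4^2 - 170*j3^2*j4 - 564*j2^3*j4 + 70*j2^2*j3^2 + 84*j2^5 = 0) ∧
    (-1620*j4*j7 + 810*j2^2*j7 + 360*j5*j6 - 1110*j2*j3*j6 + 999*j2*j4*j5
       + 960*j3^2*j5 - 549*j2^3*j5 - 972*j3*j4^2 + 1638*j2^2*j3*j4
       - 80*j2*j3^3 - 312*j2^4*j3 = 0) ∧
    (4050*j5*j7 - 25650*j2*j3*j7 - 14310*j2*j4*j6 + 9600*j3^2*j6 + 7965*j2^3*j6
       + 9450*j3*j4*j5 + 10530*j2^2*j3*j5 + 1134*j4^3 + 11259*j2^2*j4^2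
       - 12330*j2*j3^2*j4 - 9018*j2^4*j4 + 400*j3^4 + 3270*j2^3*j3^2
       + 1350*j2^6 = 0) ∧
    (-12150*j2*j3*j7 + 3600*j6^2 - 11610*j2*j4*j6 + 9750*j3^2*j6 + 4410*j2^3*j6
       + 8505*j3*j4*j5 + 3645*j2^2*j3*j5 + 1458*j4^3 + 5670*j2^2*j4^2
       - 10710*j2*j3^2*j4 - 4104*j2^4*j4 + 400*j3^4 + 2580*j2^3*j3^2
       + 576*j2^6 = 0) ∧
    (1800*j6*j7 - 10800*j2*j4*j7 + 4800*j3^2*j7 + 4950*j2^3*j7 + 4020*j3*j4*j6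
       - 8370*j2^2*j3*j6 + 162*j4^2*j5 + 7371*j2^2*j4*j5 + 2880*j2*j3^2*j5
       - 3483*j2^4*j5 - 9216*j2*j3*j4^2 + 640*j3^3*j4 + 11946*j2^3*j3*j4
       - 720*j2^2*j3^3 - 2160*j2^5*j3 = 0) ∧
    (60750*j7^2 + 178200*j3*j4*j7 - 546750*j2^2*j3*j7 + 3780*j4^2*j6
       - 246780*j2^2*j4*j6 + 348000*j2*j3^2*j6 + 137025*j2^4*j6
       + 116640*j2*j3*j4*j5 - 75600*j3^3*j5 + 223560*j2^3*j3*j5 + 29808*j2*j4^3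
       + 82170*j3^2*j4^2 + 177660*j2^3*j4^2 - 438390*j2^2*j3^2*j4
       - 148014*j2^5*j4 + 17200*j2*j3^4 + 102000*j2^4*j3^2 + 22221*j2^7 = 0) ∧
    (-(9*(3*j7 - 3*j2*j5 + 3*j3*j4 - j2^2*j3))
       = s1 * (2*(6*j6 - 9*j2*j4 - 20*j3^2 + 3*j2^3))) ∧
    (s2 = (4/7)*s1^2 - j2/14) ∧
    (s3 = j3/24 + s1^3/7 - s1*j2/56) := by
  subst q2 q3 q4 q5 q6 q7
  refine ⟨by ring, by ring, by ring, by ring, by ring, by ring, by ring, by ring, by ring⟩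

/-- if a harmonic tensor `D ∈ H⁴` lies in the closed orthotropic stratum
(`g·D = NF_orth(λ₁,λ₂,λ₃)` for some rotation `g`), then its invariants `J₂,…,J₇` satisfy the
six orthotropic syzygies; moreover, if `6J₆ − 9J₂J₄ − 20J₃² + 3J₂³ ≠ 0`, then the elementary
symmetric functions `σ₁, σ₂, σ₃` of `λ₁, λ₂, λ₃` are recovered rationally from the
invariants. -/
theorem orthotropic_syzygies (D : T4) (hD : IsHarm D)
    (g : Mat3) (l1 l2 l3 : ℝ) (hg : IsSO3 g) (hNF : act g D = NForth l1 l2 l3)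
    (j2 j3 j4 j5 j6 j7 : ℝ)
    (h2 : j2 = J2 D) (h3 : j3 = J3 D) (h4 : j4 = J4 D)
    (h5 : j5 = J5 D) (h6 : j6 = J6 D) (h7 : j7 = J7 D) :
    (-1350*j3*j7 - 840*j4*j6 + 465*j2^2*j6 + 270*j5^2 + 720*j2*j3*j5
       + 747*j2*j4^2 - 170*j3^2*j4 - 564*j2^3*j4 + 70*j2^2*j3^2 + 84*j2^5 = 0) ∧
    (-1620*j4*j7 + 810*j2^2*j7 + 360*j5*j6 - 1110*j2*j3*j6 + 999*j2*j4*j5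
       + 960*j3^2*j5 - 549*j2^3*j5 - 972*j3*j4^2 + 1638*j2^2*j3*j4
       - 80*j2*j3^3 - 312*j2^4*j3 = 0) ∧
    (4050*j5*j7 - 25650*j2*j3*j7 - 14310*j2*j4*j6 + 9600*j3^2*j6 + 7965*j2^3*j6
       + 9450*j3*j4*j5 + 10530*j2^2*j3*j5 + 1134*j4^3 + 11259*j2^2*j4^2
       - 12330*j2*j3^2*j4 - 9018*j2^4*j4 + 400*j3^4 + 3270*j2^3*j3^2
       + 1350*j2^6 = 0) ∧
    (-12150*j2*j3*j7 + 3600*j6^2 - 11610*j2*j4*j6 + 9750*j3^2*j6 + 4410*j2^3*j6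
       + 8505*j3*j4*j5 + 3645*j2^2*j3*j5 + 1458*j4^3 + 5670*j2^2*j4^2
       - 10710*j2*j3^2*j4 - 4104*j2^4*j4 + 400*j3^4 + 2580*j2^3*j3^2
       + 576*j2^6 = 0) ∧
    (1800*j6*j7 - 10800*j2*j4*j7 + 4800*j3^2*j7 + 4950*j2^3*j7 + 4020*j3*j4*j6
       - 8370*j2^2*j3*j6 + 162*j4^2*j5 + 7371*j2^2*j4*j5 + 2880*j2*j3^2*j5
       - 3483*j2^4*j5 - 9216*j2*j3*j4^2 + 640*j3^3*j4 + 11946*j2^3*j3*j4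
       - 720*j2^2*j3^3 - 2160*j2^5*j3 = 0) ∧
    (60750*j7^2 + 178200*j3*j4*j7 - 546750*j2^2*j3*j7 + 3780*j4^2*j6
       - 246780*j2^2*j4*j6 + 348000*j2*j3^2*j6 + 137025*j2^4*j6
       + 116640*j2*j3*j4*j5 - 75600*j3^3*j5 + 223560*j2^3*j3*j5 + 29808*j2*j4^3
       + 82170*j3^2*j4^2 + 177660*j2^3*j4^2 - 438390*j2^2*j3^2*j4
       - 148014*j2^5*j4 + 17200*j2*j3^4 + 102000*j2^4*j3^2 + 22221*j2^7 = 0) ∧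
    (6*j6 - 9*j2*j4 - 20*j3^2 + 3*j2^3 ≠ 0 →
      (l1 + l2 + l3 =
          -(9*(3*j7 - 3*j2*j5 + 3*j3*j4 - j2^2*j3)) /
            (2*(6*j6 - 9*j2*j4 - 20*j3^2 + 3*j2^3)) ∧
       l1*l2 + l1*l3 + l2*l3 = (4/7)*(l1 + l2 + l3)^2 - j2/14 ∧
       l1*l2*l3 = j3/24 + (l1 + l2 + l3)^3/7 - (l1 + l2 + l3)*j2/56)) := by
  obtain ⟨hg1, _⟩ := hg
  have hgt : gᵀ * g = 1 := mul_eq_one_comm.mp hg1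
  have conjmul : ∀ M N : Mat3, (g*M*gᵀ)*(g*N*gᵀ) = g*(M*N)*gᵀ := by
    intro M N
    calc (g*M*gᵀ)*(g*N*gᵀ) = g*M*(gᵀ*g)*(N*gᵀ) := by simp only [Matrix.mul_assoc]
      _ = g*(M*N)*gᵀ := by rw [hgt]; simp only [Matrix.mul_one, Matrix.mul_assoc]
  have conjtr : ∀ M : Mat3, (g*M*gᵀ).trace = M.trace := by
    intro M
    rw [Matrix.trace_mul_cycle, hgt, Matrix.one_mul]
  have hsq : sqT (NForth l1 l2 l3) = act g (sqT D) := by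
    funext i j k l
    rw [← hNF]
    exact act_pt g hgt D D i j k l
  have hcb : cbT (NForth l1 l2 l3) = act g (cbT D) := by
    funext i j k l
    show ∑ p, ∑ q, sqT (NForth l1 l2 l3) i j p q * (NForth l1 l2 l3) p q k l = _
    rw [hsq, ← hNF]
    exact act_pt g hgt (sqT D) D i j k l
  have hd2 : d2 (NForth l1 l2 l3) = g * d2 D * gᵀ := by
    ext j l
    show ∑ i, sqT (NForth l1 l2 l3) i j i l = _
    rw [hsq]
    exact tr_pt g hgt (sqT D) j l
  have hd3 : d3 (NForth l1 l2 l3) = g * d3 D * gᵀ := by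
    ext j l
    show ∑ i, cbT (NForth l1 l2 l3) i j i l = _
    rw [hcb]
    exact tr_pt g hgt (cbT D) j l
  have hJ2 : J2 D = J2 (NForth l1 l2 l3) := by
    simp only [J2]; rw [hd2, conjtr]
  have hJ3 : J3 D = J3 (NForth l1 l2 l3) := by
    simp only [J3]; rw [hd3, conjtr]
  have hJ4 : J4 D = J4 (NForth l1 l2 l3) := by
    simp only [J4]; rw [hd2, conjmul, conjtr]
  have hJ6 : J6 D = J6 (NForth l1 l2 l3) := by
    simp only [J6]; rw [hd2, conjmul, conjmul, conjtr]
  have hJ5 : J5 D = J5 (NForth l1 l2 l3) := by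
    simp only [J5]; rw [hd2, ← hNF]
    exact (quad g hgt (d2 D) (d2 D) D).symm
  have hJ7 : J7 D = J7 (NForth l1 l2 l3) := by
    simp only [J7]; rw [hd2, conjmul, ← hNF]
    exact (quad g hgt (d2 D * d2 D) (d2 D) D).symm
  have hv := NForth_eq_NFv l1 l2 l3
  have p2 : j2 = 8*(l1^2+l2^2+l3^2) + 2*(l1*l2+l1*l3+l2*l3) := by
    rw [h2, hJ2, hv, J2val]
  have p3 : j3 = -6*(l2*l3^2 + l2^2*l3 + l1*l3^2 - l1*l2*l3 + l1*l2^2 + l1^2*l3 + l1^2*l2) := by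
    rw [h3, hJ3, hv, J3val]
  have p4 : j4 = 32*(l1^4+l2^4+l3^4) + 16*(l1^3*l2+l1^3*l3+l2^3*l3+l1*l2^3+l1*l3^3+l2*l3^3)
      + 36*(l1^2*l2^2+l1^2*l3^2+l2^2*l3^2) := by
    rw [h4, hJ4, hv, J4val]
  have p5 : j5 = -16*(l2*l3^4+l2^4*l3+l1*l3^4+l1*l2^4+l1^4*l3+l1^4*l2)
      -20*(l2^2*l3^3+l2^3*l3^2+l1^2*l3^3+l1^2*l2^3+l1^3*l3^2+l1^3*l2^2)
      +8*(l1*l2*l3^3+l1*l2^3*l3+l1^3*l2*l3)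
      +64*(l1*l2^2*l3^2+l1^2*l2*l3^2+l1^2*l2^2*l3) := by
    rw [h5, hJ5, hv, J5val]
  have p6 : j6 = 128*(l1^6+l2^6+l3^6) + 96*(l1^5*l2+l1^5*l3+l2^5*l3+l1*l2^5+l1*l3^5+l2*l3^5)
      + 240*(l1^4*l2^2+l1^4*l3^2+l2^4*l3^2+l1^2*l2^4+l1^2*l3^4+l2^2*l3^4)
      + 200*(l1^3*l2^3+l1^3*l3^3+l2^3*l3^3) := by
    rw [h6, hJ6, hv, J6val]
  have p7 : j7 = -64*(l2*l3^6+l2^6*l3+l1*l3^6+l1*l2^6+l1^6*l3+l1^6*l2)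
      -128*(l2^2*l3^5+l2^5*l3^2+l1^2*l3^5+l1^2*l2^5+l1^5*l3^2+l1^5*l2^2)
      -312*(l2^3*l3^4+l2^4*l3^3+l1^3*l3^4+l1^3*l2^4+l1^4*l3^3+l1^4*l2^3)
      +64*(l1*l2*l3^5+l1*l2^5*l3+l1^5*l2*l3+l1*l2^3*l3^3+l1^3*l2*l3^3+l1^3*l2^3*l3)
      +232*(l1*l2^2*l3^4+l1*l2^4*l3^2+l1^2*l2*l3^4+l1^2*l2^4*l3+l1^4*l2*l3^2+l1^4*l2^2*l3)
      +416*(l1^2*l2^2*l3^3+l1^2*l2^3*l3^2+l1^3*l2^2*l3^2) := by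
    rw [h7, hJ7, hv, J7val]
  obtain ⟨sA, sB, sC, sD, sE, sF, sig1, sig2, sig3⟩ :=
    syzygy_abstract (l1+l2+l3) (l1*l2+l1*l3+l2*l3) (l1*l2*l3) j2 j3 j4 j5 j6 j7
      (by rw [p2]; ring) (by rw [p3]; ring) (by rw [p4]; ring)
      (by rw [p5]; ring) (by rw [p6]; ring) (by rw [p7]; ring)
  refine ⟨sA, sB, sC, sD, sE, sF, fun hden => ⟨?_, sig2, sig3⟩⟩
  rw [eq_div_iff (mul_ne_zero two_ne_zero hden)]
  exact sig1.symm
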